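/- Let n ≥ 3 and suppose G_n and G_n' are two S_{n-1,n-1}-free subgraphs of Q_n, each with m edges, such that no vertex v ∈ {0,1}^n has degree n in both G_n and G_n'. Then the subgraph of Q_{n+1} obtained by placing G_n on the vertices {(x,0) : x ∈ {0,1}^n}, placing G_n' on {(x,1) : x ∈ {0,1}^n}, and adding all 2^n edges {(x,0),(x,1)}, is S_{n,n}-free and has 2m + 2^n edges. -/

import Mathlib

open SimpleGraph

/-- The `n`-dimensional hypercube: vertices are `{0,1}^n`, adjacent iff they
differ in exactly one coordinate (Hamming distance 1). -/
def cube (n : ℕ) : SimpleGraph (Fin n → Bool) where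
  Adj x y := hammingDist x y = 1
  symm := ⟨fun x y h => (hammingDist_comm y x).trans h⟩
  loopless := ⟨fun x h => absurd ((hammingDist_self x).symm.trans h) zero_ne_one⟩

/-- The double star `S_{k,l}`: an edge `uv` (here `Sum.inl none` and
`Sum.inr none`) with `k` leaves attached to `u` and `l` further leaves
attached to `v`. -/
def doubleStar (k l : ℕ) : SimpleGraph (Option (Fin k) ⊕ Option (Fin l)) :=
  SimpleGraph.fromRel (fun a b =>
    (a = Sum.inl none ∧ b = Sum.inr none) ∨
    (a = Sum.inl none ∧ ∃ i, b = Sum.inl (some i)) ∨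
    (a = Sum.inr none ∧ ∃ j, b = Sum.inr (some j)))

/-- `G` contains `H` as a (not necessarily induced) subgraph. -/
def Contains {α β : Type*} (G : SimpleGraph α) (H : SimpleGraph β) : Prop :=
  ∃ f : β ↪ α, ∀ a b, H.Adj a b → G.Adj (f a) (f b)

/-- The Turán number of `H` in the hypercube `Q_n`: the maximum number of
edges of an `H`-free subgraph of `Q_n`. -/
noncomputable def exQ (n : ℕ) {β : Type*} (H : SimpleGraph β) : ℕ :=
  sSup {m | ∃ G : SimpleGraph (Fin n → Bool),
    G ≤ cube n ∧ ¬ Contains G H ∧ G.edgeSet.ncard = m}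

/-- Number of coordinates equal to `1` (Hamming weight). -/
def wt {n : ℕ} (x : Fin n → Bool) : ℕ := hammingDist x (fun _ => false)

/-- projection dropping the last coordinate -/
def prj {n : ℕ} (a : Fin (n+1) → Bool) : Fin n → Bool := fun i => a i.castSucc

@[simp] lemma prj_snoc {n : ℕ} (x : Fin n → Bool) (b : Bool) : prj (Fin.snoc x b) = x := by
  funext i; simp [prj, Fin.snoc_castSucc]

lemma snoc_prj {n : ℕ} (a : Fin (n+1) → Bool) : Fin.snoc (prj a) (a (Fin.last n)) = a :=
  Fin.snoc_init_self a

lemma ext_snoc {n : ℕ} {a b : Fin (n+1) → Bool} (h1 : prj a = prj b)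
    (h2 : a (Fin.last n) = b (Fin.last n)) : a = b := by
  rw [← snoc_prj a, ← snoc_prj b, h1, h2]

lemma ham_snoc {n : ℕ} (x y : Fin (n+1) → Bool) :
    hammingDist x y = hammingDist (prj x) (prj y)
      + (if x (Fin.last n) = y (Fin.last n) then 0 else 1) := by
  simp only [hammingDist, Finset.card_filter]
  rw [Fin.sum_univ_castSucc]
  congr 1
  by_cases h : x (Fin.last n) = y (Fin.last n) <;> simp [h]

lemma cube_deg_le {n : ℕ} (G : SimpleGraph (Fin n → Bool)) (hG : G ≤ cube n)
    (x : Fin n → Bool) : (G.neighborSet x).ncard ≤ n := by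
  have hsub : G.neighborSet x ⊆ (fun i : Fin n => Function.update x i (!x i)) '' Set.univ := by
    intro y hy
    have hd : hammingDist x y = 1 := hG hy
    rw [hammingDist, Finset.card_eq_one] at hd
    obtain ⟨i, hi⟩ := hd
    refine ⟨i, trivial, ?_⟩
    funext j
    by_cases hj : j = i
    · subst hj
      have : j ∈ Finset.filter (fun k => x k ≠ y k) Finset.univ := by rw [hi]; simp
      have hne : x j ≠ y j := (Finset.mem_filter.mp this).2
      show Function.update x j (!x j) j = y j
      simp only [Function.update_self]
      cases hx : x j <;> cases hy' : y j <;> simp_all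
    · have : j ∉ Finset.filter (fun k => x k ≠ y k) Finset.univ := by
        rw [hi]; simp [hj]
      have heq : x j = y j := by
        by_contra hc; exact this (by simp [hc])
      show Function.update x i (!x i) j = y j
      rw [Function.update_of_ne hj, heq]
  calc (G.neighborSet x).ncard ≤ ((fun i : Fin n => Function.update x i (!x i)) '' Set.univ).ncard :=
        Set.ncard_le_ncard hsub (Set.toFinite _)
    _ ≤ (Set.univ : Set (Fin n)).ncard := Set.ncard_image_le (Set.toFinite _)
    _ = n := by rw [Set.ncard_univ]; simp

/-- From an adjacent pair with `k` private neighbors on each side, build a double star. -/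
lemma contains_doubleStar {α : Type*} (Gb : SimpleGraph α) (k : ℕ) (x y : α)
    (hxy : Gb.Adj x y) (Su Sv : Set α)
    (hSu : Su ⊆ Gb.neighborSet x) (hSv : Sv ⊆ Gb.neighborSet y)
    (hyu : y ∉ Su) (hxv : x ∉ Sv) (hdisj : Disjoint Su Sv)
    (hfu : Su.Finite) (hfv : Sv.Finite)
    (hcu : k ≤ Su.ncard) (hcv : k ≤ Sv.ncard) :
    Contains Gb (doubleStar k k) := by
  have hcu' : k ≤ hfu.toFinset.card := by rwa [← Set.ncard_eq_toFinset_card _ hfu] 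
  have hcv' : k ≤ hfv.toFinset.card := by rwa [← Set.ncard_eq_toFinset_card _ hfv] 
  obtain ⟨Tu, hTu, hTuc⟩ := Finset.exists_subset_card_eq hcu'
  obtain ⟨Tv, hTv, hTvc⟩ := Finset.exists_subset_card_eq hcv'
  set eu : Fin k → α := fun i => ((Finset.equivFinOfCardEq hTuc).symm i : α) with heu
  set ev : Fin k → α := fun j => ((Finset.equivFinOfCardEq hTvc).symm j : α) with hev
  have heuinj : Function.Injective eu := fun a b h => by
    have := Subtype.ext h
    simpa using (Finset.equivFinOfCardEq hTuc).symm.injective this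
  have hevinj : Function.Injective ev := fun a b h => by
    have := Subtype.ext h
    simpa using (Finset.equivFinOfCardEq hTvc).symm.injective this
  have heuS : ∀ i, eu i ∈ Su := fun i => by
    have := ((Finset.equivFinOfCardEq hTuc).symm i).2
    exact hfu.mem_toFinset.mp (hTu this)
  have hevS : ∀ j, ev j ∈ Sv := fun j => by
    have := ((Finset.equivFinOfCardEq hTvc).symm j).2
    exact hfv.mem_toFinset.mp (hTv this)
  have hxSu : x ∉ Su := fun h => Gb.irrefl (hSu h)
  have hySv : y ∉ Sv := fun h => Gb.irrefl (hSv h)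
  set f : Option (Fin k) ⊕ Option (Fin k) → α :=
    Sum.elim (fun o => o.elim x eu) (fun o => o.elim y ev) with hf
  have hfinj : Function.Injective f := by
    rintro (a|a) (b|b) h <;> rcases a with _|i <;> rcases b with _|j <;>
      simp only [hf, Sum.elim_inl, Sum.elim_inr, Option.elim] at h
    · rfl
    · exact absurd h.symm (fun hh => hxSu (hh ▸ heuS j))
    · exact absurd h (fun hh => hxSu (hh ▸ heuS i))
    · rw [heuinj h]
    · exact absurd h hxy.ne
    · exact absurd h.symm (fun hh => hxv (hh ▸ hevS j))
    · exact absurd h (fun hh => hyu (hh ▸ heuS i))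
    · exact absurd h (fun hh => (hdisj.ne_of_mem (heuS i) (hevS j)) hh)
    · exact absurd h hxy.ne.symm
    · exact absurd h.symm (fun hh => hyu (hh ▸ heuS j))
    · exact absurd h (fun hh => hxv (hh ▸ hevS i))
    · exact absurd h (fun hh => (hdisj.ne_of_mem (heuS j) (hevS i)) hh.symm)
    · rfl
    · exact absurd h.symm (fun hh => hySv (hh ▸ hevS j))
    · exact absurd h (fun hh => hySv (hh ▸ hevS i))
    · rw [hevinj h]
  refine ⟨⟨f, hfinj⟩, ?_⟩
  intro a b hab
  rw [doubleStar, fromRel_adj] at hab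
  obtain ⟨-, hrel⟩ := hab
  have adj1 : ∀ i, Gb.Adj x (eu i) := fun i => hSu (heuS i)
  have adj2 : ∀ j, Gb.Adj y (ev j) := fun j => hSv (hevS j)
  rcases hrel with (⟨ha, hb⟩|⟨ha, i, hb⟩|⟨ha, j, hb⟩)|(⟨hb, ha⟩|⟨hb, i, ha⟩|⟨hb, j, ha⟩) <;>
    subst ha <;> subst hb <;>
    simp only [Function.Embedding.coeFn_mk, hf, Sum.elim_inl, Sum.elim_inr, Option.elim]
  · exact hxy
  · exact adj1 i
  · exact adj2 j
  · exact hxy.symm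
  · exact (adj1 i).symm
  · exact (adj2 j).symm

/-- gluing two `S_{n-1,n-1}`-free subgraphs of `Q_n` with no common
degree-`n` vertex along a perfect matching yields an `S_{n,n}`-free subgraph of
`Q_{n+1}` with `2m + 2^n` edges. -/
theorem stmt6 (n : ℕ) (hn : 3 ≤ n) (m : ℕ)
    (G G' : SimpleGraph (Fin n → Bool))
    (hG : G ≤ cube n) (hG' : G' ≤ cube n)
    (hfree : ¬ Contains G (doubleStar (n - 1) (n - 1)))
    (hfree' : ¬ Contains G' (doubleStar (n - 1) (n - 1)))
    (hm : G.edgeSet.ncard = m) (hm' : G'.edgeSet.ncard = m)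
    (hdeg : ∀ v, ¬ ((G.neighborSet v).ncard = n ∧ (G'.neighborSet v).ncard = n))
    (H : SimpleGraph (Fin (n + 1) → Bool))
    (hH : H = SimpleGraph.fromRel (fun x y =>
      (x (Fin.last n) = false ∧ y (Fin.last n) = false ∧
        G.Adj (fun i => x i.castSucc) (fun i => y i.castSucc)) ∨
      (x (Fin.last n) = true ∧ y (Fin.last n) = true ∧
        G'.Adj (fun i => x i.castSucc) (fun i => y i.castSucc)) ∨
      (∀ i : Fin n, x i.castSucc = y i.castSucc))) :
    H ≤ cube (n + 1) ∧ ¬ Contains H (doubleStar n n) ∧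
      H.edgeSet.ncard = 2 * m + 2 ^ n := by
  have hAdj : ∀ a b : Fin (n+1) → Bool,
      H.Adj a b ↔
      a ≠ b ∧ ((a (Fin.last n) = false ∧ b (Fin.last n) = false ∧ G.Adj (prj a) (prj b)) ∨
        (a (Fin.last n) = true ∧ b (Fin.last n) = true ∧ G'.Adj (prj a) (prj b)) ∨
        prj a = prj b) := by
    intro a b
    rw [hH, fromRel_adj]
    refine and_congr_right fun hne => ?_
    constructor
    · rintro ((⟨h1,h2,h3⟩|⟨h1,h2,h3⟩|h3)|(⟨h1,h2,h3⟩|⟨h1,h2,h3⟩|h3))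
      · exact Or.inl ⟨h1, h2, h3⟩
      · exact Or.inr (Or.inl ⟨h1, h2, h3⟩)
      · exact Or.inr (Or.inr (funext h3))
      · exact Or.inl ⟨h2, h1, h3.symm⟩
      · exact Or.inr (Or.inl ⟨h2, h1, h3.symm⟩)
      · exact Or.inr (Or.inr (funext fun i => (h3 i).symm))
    · rintro (⟨h1,h2,h3⟩|⟨h1,h2,h3⟩|h3)
      · exact Or.inl (Or.inl ⟨h1, h2, h3⟩)
      · exact Or.inl (Or.inr (Or.inl ⟨h1, h2, h3⟩))
      · exact Or.inl (Or.inr (Or.inr (fun i => congrFun h3 i)))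
  refine ⟨?_, ?_, ?_⟩
  · -- H ≤ cube (n+1)
    intro a b hab
    rw [hAdj] at hab
    obtain ⟨hne, hrel⟩ := hab
    show hammingDist a b = 1
    rw [ham_snoc]
    rcases hrel with ⟨h1,h2,h3⟩|⟨h1,h2,h3⟩|h3
    · have : hammingDist (prj a) (prj b) = 1 := hG h3
      rw [this, h1, h2]; simp
    · have : hammingDist (prj a) (prj b) = 1 := hG' h3
      rw [this, h1, h2]; simp
    · have h0 : hammingDist (prj a) (prj b) = 0 := by rw [h3, hammingDist_self]
      have hlast : a (Fin.last n) ≠ b (Fin.last n) := fun hc => hne (ext_snoc h3 hc)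
      rw [h0, if_neg hlast]
  · -- S_{n,n}-freeness
    rintro ⟨f, hf⟩
    have hinj := f.injective
    set u := f (Sum.inl none) with hu
    set v := f (Sum.inr none) with hv
    set L : Fin n → (Fin (n+1) → Bool) := fun i => f (Sum.inl (some i)) with hLdef
    set R : Fin n → (Fin (n+1) → Bool) := fun j => f (Sum.inr (some j)) with hRdef
    have dsAdj1 : (doubleStar n n).Adj (Sum.inl none) (Sum.inr none) := by
      rw [doubleStar, fromRel_adj]; exact ⟨by simp, Or.inl (Or.inl ⟨rfl, rfl⟩)⟩
    have dsAdj2 : ∀ i : Fin n, (doubleStar n n).Adj (Sum.inl none) (Sum.inl (some i)) := by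
      intro i; rw [doubleStar, fromRel_adj]
      exact ⟨by simp, Or.inl (Or.inr (Or.inl ⟨rfl, i, rfl⟩))⟩
    have dsAdj3 : ∀ j : Fin n, (doubleStar n n).Adj (Sum.inr none) (Sum.inr (some j)) := by
      intro j; rw [doubleStar, fromRel_adj]
      exact ⟨by simp, Or.inl (Or.inr (Or.inr ⟨rfl, j, rfl⟩))⟩
    have huv : H.Adj u v := hf _ _ dsAdj1
    have hLadj : ∀ i, H.Adj u (L i) := fun i => hf _ _ (dsAdj2 i)
    have hRadj : ∀ j, H.Adj v (R j) := fun j => hf _ _ (dsAdj3 j)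
    have hLinj : Function.Injective L := fun i j h => by
      have := hinj h; simpa using this
    have hRinj : Function.Injective R := fun i j h => by
      have := hinj h; simpa using this
    have hLv : ∀ i, L i ≠ v := fun i h => by have := hinj h; simp at this
    have hRu : ∀ j, R j ≠ u := fun j h => by have := hinj h; simp at this
    have hLR : ∀ i j, L i ≠ R j := fun i j h => by have := hinj h; simp at this
    have hLu : ∀ i, L i ≠ u := fun i => (hLadj i).ne'
    have hRv : ∀ j, R j ≠ v := fun j => (hRadj j).ne'
    by_cases hpr : prj u = prj v
    · -- Case A: u, v matched along the last coordinate
      have hlastne : u (Fin.last n) ≠ v (Fin.last n) := fun hc => huv.ne (ext_snoc hpr hc)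
      set x := prj u with hx
      have hA : ∀ (Gb : SimpleGraph (Fin n → Bool)) (c : Bool)
          (K : Fin n → (Fin (n+1) → Bool)),
          Function.Injective K →
          (∀ i, prj (K i) ≠ x) →
          (∀ i, prj (K i) = x ∨ (K i (Fin.last n) = c ∧ Gb.Adj x (prj (K i)))) →
          n ≤ (Gb.neighborSet x).ncard := by
        intro Gb c K hKinj hKx hcl
        have h1 : ∀ i, K i (Fin.last n) = c ∧ Gb.Adj x (prj (K i)) := by
          intro i; rcases hcl i with h|h
          · exact absurd h (hKx i)
          · exact h
        have hrange : Set.range (fun i => prj (K i)) ⊆ Gb.neighborSet x := by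
          rintro z ⟨i, rfl⟩; exact (h1 i).2
        have hpinj : Function.Injective (fun i => prj (K i)) := by
          intro i j hij
          exact hKinj (ext_snoc hij (by rw [(h1 i).1, (h1 j).1]))
        have hr : (Set.range fun i => prj (K i)).ncard = n := by
          rw [← Set.image_univ, Set.ncard_image_of_injective _ hpinj, Set.ncard_univ]
          simp
        have hle := Set.ncard_le_ncard hrange (Set.toFinite _)
        omega
      have hKxL : ∀ i, prj (L i) ≠ x := by
        intro i hc
        have hlne : L i (Fin.last n) ≠ u (Fin.last n) :=
          fun h => (hLu i) (ext_snoc hc h)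
        have : L i (Fin.last n) = v (Fin.last n) := by
          revert hlne hlastne
          cases L i (Fin.last n) <;> cases u (Fin.last n) <;> cases v (Fin.last n) <;> simp
        exact hLv i (ext_snoc (hc.trans hpr) this)
      have hKxR : ∀ j, prj (R j) ≠ x := by
        intro j hc
        have hlne : R j (Fin.last n) ≠ v (Fin.last n) :=
          fun h => (hRv j) (ext_snoc (hc.trans hpr) h)
        have hul : R j (Fin.last n) = u (Fin.last n) := by
          revert hlne hlastne
          cases R j (Fin.last n) <;> cases u (Fin.last n) <;> cases v (Fin.last n) <;> simp
        exact hRu j (ext_snoc hc hul)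
      have hdegG : (G.neighborSet x).ncard = n ∧ (G'.neighborSet x).ncard = n := by
        cases hb : u (Fin.last n)
        · -- u in slice false, v in slice true
          have hvl : v (Fin.last n) = true := by
            revert hlastne; rw [hb]; cases v (Fin.last n) <;> simp
          constructor
          · refine le_antisymm (cube_deg_le G hG x) (hA G false L hLinj hKxL ?_)
            intro i
            rcases ((hAdj u (L i)).mp (hLadj i)).2 with ⟨h1,h2,h3⟩|⟨h1,h2,h3⟩|h3
            · exact Or.inr ⟨h2, h3⟩
            · rw [hb] at h1; exact absurd h1 (by simp)
            · exact Or.inl h3.symm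
          · refine le_antisymm (cube_deg_le G' hG' x) (hA G' true R hRinj hKxR ?_)
            intro j
            rcases ((hAdj v (R j)).mp (hRadj j)).2 with ⟨h1,h2,h3⟩|⟨h1,h2,h3⟩|h3
            · rw [hvl] at h1; exact absurd h1 (by simp)
            · exact Or.inr ⟨h2, by rw [hpr]; exact h3⟩
            · exact Or.inl (h3.symm.trans hpr.symm)
        · -- u in slice true, v in slice false
          have hvl : v (Fin.last n) = false := by
            revert hlastne; rw [hb]; cases v (Fin.last n) <;> simp
          constructor
          · refine le_antisymm (cube_deg_le G hG x) (hA G false R hRinj hKxR ?_)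
            intro j
            rcases ((hAdj v (R j)).mp (hRadj j)).2 with ⟨h1,h2,h3⟩|⟨h1,h2,h3⟩|h3
            · exact Or.inr ⟨h2, by rw [hpr]; exact h3⟩
            · rw [hvl] at h1; exact absurd h1 (by simp)
            · exact Or.inl (h3.symm.trans hpr.symm)
          · refine le_antisymm (cube_deg_le G' hG' x) (hA G' true L hLinj hKxL ?_)
            intro i
            rcases ((hAdj u (L i)).mp (hLadj i)).2 with ⟨h1,h2,h3⟩|⟨h1,h2,h3⟩|h3
            · rw [hb] at h1; exact absurd h1 (by simp)
            · exact Or.inr ⟨h2, h3⟩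
            · exact Or.inl h3.symm
      exact hdeg x hdegG
    · -- Case B: u, v in the same slice
      have hB : ∀ (Gb : SimpleGraph (Fin n → Bool)) (c : Bool),
          ¬ Contains Gb (doubleStar (n-1) (n-1)) →
          u (Fin.last n) = c → v (Fin.last n) = c →
          Gb.Adj (prj u) (prj v) →
          (∀ w z : Fin (n+1) → Bool, H.Adj w z → w (Fin.last n) = c →
            prj z = prj w ∨ (z (Fin.last n) = c ∧ Gb.Adj (prj w) (prj z))) →
          False := by
        intro Gb c hfb huc hvc hxy hcls
        set x := prj u with hx
        set y := prj v with hy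
        set bu : Fin (n+1) → Bool := Fin.snoc x (!c) with hbu
        set bv : Fin (n+1) → Bool := Fin.snoc y (!c) with hbv
        have hclsL : ∀ i, L i = bu ∨ (L i (Fin.last n) = c ∧ Gb.Adj x (prj (L i))) := by
          intro i
          rcases hcls u (L i) (hLadj i) huc with h|h
          · left
            have hlast : L i (Fin.last n) = !c := by
              have hne : L i (Fin.last n) ≠ c := fun hc =>
                (hLu i) (ext_snoc h (by rw [huc, hc]))
              revert hne; cases c <;> cases L i (Fin.last n) <;> simp
            rw [← snoc_prj (L i), h, hlast]
          · exact Or.inr h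
        have hclsR : ∀ j, R j = bv ∨ (R j (Fin.last n) = c ∧ Gb.Adj y (prj (R j))) := by
          intro j
          rcases hcls v (R j) (hRadj j) hvc with h|h
          · left
            have hlast : R j (Fin.last n) = !c := by
              have hne : R j (Fin.last n) ≠ c := fun hc =>
                (hRv j) (ext_snoc h (by rw [hvc, hc]))
              revert hne; cases c <;> cases R j (Fin.last n) <;> simp
            rw [← snoc_prj (R j), h, hlast]
          · exact Or.inr h
        set Su : Set (Fin n → Bool) := prj '' (Set.range L \ {bu}) with hSu
        set Sv : Set (Fin n → Bool) := prj '' (Set.range R \ {bv}) with hSv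
        have hwL : ∀ w ∈ Set.range L \ {bu}, w (Fin.last n) = c ∧ Gb.Adj x (prj w) := by
          rintro w ⟨⟨i, rfl⟩, hw⟩
          rcases hclsL i with h|h
          · exact absurd h hw
          · exact h
        have hwR : ∀ w ∈ Set.range R \ {bv}, w (Fin.last n) = c ∧ Gb.Adj y (prj w) := by
          rintro w ⟨⟨j, rfl⟩, hw⟩
          rcases hclsR j with h|h
          · exact absurd h hw
          · exact h
        have hSux : Su ⊆ Gb.neighborSet x := by
          rintro z ⟨w, hw, rfl⟩; exact (hwL w hw).2
        have hSvy : Sv ⊆ Gb.neighborSet y := by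
          rintro z ⟨w, hw, rfl⟩; exact (hwR w hw).2
        have hyu : y ∉ Su := by
          rintro ⟨w, hw, hwy⟩
          have h1 := hwL w hw
          obtain ⟨⟨i, rfl⟩, -⟩ := hw
          exact hLv i (ext_snoc hwy (by rw [h1.1, hvc]))
        have hxv : x ∉ Sv := by
          rintro ⟨w, hw, hwx⟩
          have h1 := hwR w hw
          obtain ⟨⟨j, rfl⟩, -⟩ := hw
          exact hRu j (ext_snoc hwx (by rw [h1.1, huc]))
        have hdisj : Disjoint Su Sv := by
          rw [Set.disjoint_left]
          rintro z ⟨w1, hw1, rfl⟩ ⟨w2, hw2, hw2z⟩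
          have h1 := hwL w1 hw1
          have h2 := hwR w2 hw2
          obtain ⟨⟨i, rfl⟩, -⟩ := hw1
          obtain ⟨⟨j, rfl⟩, -⟩ := hw2
          exact hLR i j (ext_snoc hw2z.symm (by rw [h1.1, h2.1]))
        have hcount : ∀ (K : Fin n → (Fin (n+1) → Bool)) (bK : Fin (n+1) → Bool),
            Function.Injective K →
            n - 1 ≤ (Set.range K \ {bK}).ncard := by
          intro K bK hKinj
          have h1 : (Set.range K).ncard = n := by
            rw [← Set.image_univ, Set.ncard_image_of_injective _ hKinj, Set.ncard_univ]
            simp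
          have h2 : (Set.range K).ncard ≤ (Set.range K \ {bK}).ncard + 1 := by
            calc (Set.range K).ncard ≤ ((Set.range K \ {bK}) ∪ {bK}).ncard :=
                Set.ncard_le_ncard (fun w hw => by
                  by_cases hwb : w = bK
                  · exact Or.inr hwb
                  · exact Or.inl ⟨hw, hwb⟩) (Set.toFinite _)
              _ ≤ (Set.range K \ {bK}).ncard + ({bK} : Set _).ncard := Set.ncard_union_le _ _
              _ = (Set.range K \ {bK}).ncard + 1 := by rw [Set.ncard_singleton]
          omega
        have hinjOnL : Set.InjOn prj (Set.range L \ {bu}) := fun w1 h1 w2 h2 hw =>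
          ext_snoc hw (by rw [(hwL w1 h1).1, (hwL w2 h2).1])
        have hinjOnR : Set.InjOn prj (Set.range R \ {bv}) := fun w1 h1 w2 h2 hw =>
          ext_snoc hw (by rw [(hwR w1 h1).1, (hwR w2 h2).1])
        have hcu : n - 1 ≤ Su.ncard := by
          rw [hSu, Set.ncard_image_of_injOn hinjOnL]; exact hcount L bu hLinj
        have hcv : n - 1 ≤ Sv.ncard := by
          rw [hSv, Set.ncard_image_of_injOn hinjOnR]; exact hcount R bv hRinj
        exact hfb (contains_doubleStar Gb (n-1) x y hxy Su Sv hSux hSvy hyu hxv hdisj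
          (Set.toFinite _) (Set.toFinite _) hcu hcv)
      rcases ((hAdj u v).mp huv).2 with ⟨h1,h2,h3⟩|⟨h1,h2,h3⟩|h3
      · refine hB G false hfree h1 h2 h3 ?_
        intro w z hwz hwc
        rcases ((hAdj w z).mp hwz).2 with ⟨k1,k2,k3⟩|⟨k1,k2,k3⟩|k3
        · exact Or.inr ⟨k2, k3⟩
        · rw [hwc] at k1; exact absurd k1 (by simp)
        · exact Or.inl k3.symm
      · refine hB G' true hfree' h1 h2 h3 ?_
        intro w z hwz hwc
        rcases ((hAdj w z).mp hwz).2 with ⟨k1,k2,k3⟩|⟨k1,k2,k3⟩|k3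
        · rw [hwc] at k1; exact absurd k1 (by simp)
        · exact Or.inr ⟨k2, k3⟩
        · exact Or.inl k3.symm
      · exact hpr h3
  · -- edge count
    have hne01 : ∀ p q : Fin n → Bool,
        (Fin.snoc p false : Fin (n+1) → Bool) ≠ Fin.snoc q true := by
      intro p q h
      have := congrFun h (Fin.last n)
      simp [Fin.snoc_last] at this
    have hi0 : Function.Injective (fun x : Fin n → Bool => (Fin.snoc x false : Fin (n+1) → Bool)) := by
      intro a b h
      have := congrArg prj h; simpa using this
    have hi1 : Function.Injective (fun x : Fin n → Bool => (Fin.snoc x true : Fin (n+1) → Bool)) := by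
      intro a b h
      have := congrArg prj h; simpa using this
    have hsnoc_eq : ∀ (a : Fin (n+1) → Bool) (c : Bool), a (Fin.last n) = c →
        Fin.snoc (prj a) c = a := by
      intro a c hc; rw [← hc]; exact snoc_prj a
    have hedge : H.edgeSet =
        Sym2.map (fun x => (Fin.snoc x false : Fin (n+1) → Bool)) '' G.edgeSet ∪
        Sym2.map (fun x => (Fin.snoc x true : Fin (n+1) → Bool)) '' G'.edgeSet ∪
        (fun x : Fin n → Bool =>
          s((Fin.snoc x false : Fin (n+1) → Bool), (Fin.snoc x true : Fin (n+1) → Bool))) ''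
          Set.univ := by
      ext e
      induction e with
      | _ a b =>
        simp only [Set.mem_union, Set.mem_image, mem_edgeSet]
        constructor
        · intro h
          obtain ⟨hne, hrel⟩ := (hAdj a b).mp h
          rcases hrel with ⟨h1,h2,h3⟩|⟨h1,h2,h3⟩|h3
          · refine Or.inl (Or.inl ⟨s(prj a, prj b), h3, ?_⟩)
            rw [Sym2.map_pair_eq, hsnoc_eq a false h1, hsnoc_eq b false h2]
          · refine Or.inl (Or.inr ⟨s(prj a, prj b), h3, ?_⟩)
            rw [Sym2.map_pair_eq, hsnoc_eq a true h1, hsnoc_eq b true h2]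
          · have hlne : a (Fin.last n) ≠ b (Fin.last n) := fun hc => hne (ext_snoc h3 hc)
            refine Or.inr ⟨prj a, trivial, ?_⟩
            cases ha : a (Fin.last n)
            · have hb : b (Fin.last n) = true := by
                revert hlne; rw [ha]; cases b (Fin.last n) <;> simp
              rw [hsnoc_eq a false ha, h3, hsnoc_eq b true hb]
            · have hb : b (Fin.last n) = false := by
                revert hlne; rw [ha]; cases b (Fin.last n) <;> simp
              rw [h3, hsnoc_eq b false hb, ← h3, hsnoc_eq a true ha, Sym2.eq_swap]
        · rintro ((⟨e0, he0, hmap⟩|⟨e0, he0, hmap⟩)|⟨x, -, hmap⟩)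
          · revert he0 hmap
            induction e0 with
            | _ p q =>
              intro he0 hmap
              rw [Sym2.map_pair_eq, Sym2.eq_iff] at hmap
              rw [mem_edgeSet] at he0
              have hadj : H.Adj (Fin.snoc p false) (Fin.snoc q false) :=
                (hAdj _ _).mpr ⟨fun hc => he0.ne (hi0 hc), Or.inl (by simp [Fin.snoc_last]; exact he0)⟩
              rcases hmap with ⟨hp, hq⟩|⟨hp, hq⟩
              · rw [← hp, ← hq]; exact hadj
              · rw [← hp, ← hq]; exact hadj.symm
          · revert he0 hmap
            induction e0 with
            | _ p q =>
              intro he0 hmap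
              rw [Sym2.map_pair_eq, Sym2.eq_iff] at hmap
              rw [mem_edgeSet] at he0
              have hadj : H.Adj (Fin.snoc p true) (Fin.snoc q true) :=
                (hAdj _ _).mpr ⟨fun hc => he0.ne (hi1 hc),
                  Or.inr (Or.inl (by simp [Fin.snoc_last]; exact he0))⟩
              rcases hmap with ⟨hp, hq⟩|⟨hp, hq⟩
              · rw [← hp, ← hq]; exact hadj
              · rw [← hp, ← hq]; exact hadj.symm
          · rw [Sym2.eq_iff] at hmap
            have hadj : H.Adj (Fin.snoc x false) (Fin.snoc x true) :=
              (hAdj _ _).mpr ⟨hne01 x x, Or.inr (Or.inr (by simp))⟩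
            rcases hmap with ⟨hp, hq⟩|⟨hp, hq⟩
            · rw [← hp, ← hq]; exact hadj
            · rw [← hp, ← hq]; exact hadj.symm
    have hpair : Function.Injective (fun x : Fin n → Bool =>
        s((Fin.snoc x false : Fin (n+1) → Bool), (Fin.snoc x true : Fin (n+1) → Bool))) := by
      intro a b h
      simp only [Sym2.eq_iff] at h
      rcases h with ⟨h1, -⟩|⟨h1, -⟩
      · exact hi0 h1
      · exact absurd h1 (hne01 a b)
    have d1 : Disjoint (Sym2.map (fun x : Fin n → Bool => (Fin.snoc x false : Fin (n+1) → Bool)) '' G.edgeSet)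
        (Sym2.map (fun x : Fin n → Bool => (Fin.snoc x true : Fin (n+1) → Bool)) '' G'.edgeSet) := by
      rw [Set.disjoint_left]
      rintro e ⟨e0, -, rfl⟩ ⟨e1, -, hmap⟩
      revert hmap
      induction e0 with
      | _ p q =>
        induction e1 with
        | _ p' q' =>
          intro hmap
          rw [Sym2.map_pair_eq, Sym2.map_pair_eq, Sym2.eq_iff] at hmap
          rcases hmap with ⟨h1, -⟩|⟨h1, -⟩
          · exact hne01 p p' h1.symm
          · exact hne01 q p' h1.symm
    have d2 : Disjoint
        (Sym2.map (fun x : Fin n → Bool => (Fin.snoc x false : Fin (n+1) → Bool)) '' G.edgeSet ∪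
          Sym2.map (fun x : Fin n → Bool => (Fin.snoc x true : Fin (n+1) → Bool)) '' G'.edgeSet)
        ((fun x : Fin n → Bool =>
          s((Fin.snoc x false : Fin (n+1) → Bool), (Fin.snoc x true : Fin (n+1) → Bool))) ''
          Set.univ) := by
      rw [Set.disjoint_left]
      rintro e (⟨e0, -, rfl⟩|⟨e0, -, rfl⟩) ⟨x, -, hmap⟩
      · revert hmap
        induction e0 with
        | _ p q =>
          intro hmap
          rw [Sym2.map_pair_eq, Sym2.eq_iff] at hmap
          rcases hmap with ⟨-, h1⟩|⟨-, h1⟩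
          · exact hne01 q x h1.symm
          · exact hne01 p x h1.symm
      · revert hmap
        induction e0 with
        | _ p q =>
          intro hmap
          rw [Sym2.map_pair_eq, Sym2.eq_iff] at hmap
          rcases hmap with ⟨h1, -⟩|⟨h1, -⟩
          · exact hne01 x p h1
          · exact hne01 x q h1
    rw [hedge, Set.ncard_union_eq d2 (Set.toFinite _) (Set.toFinite _),
        Set.ncard_union_eq d1 (Set.toFinite _) (Set.toFinite _),
        Set.ncard_image_of_injective _ (Sym2.map.injective hi0),
        Set.ncard_image_of_injective _ (Sym2.map.injective hi1),
        Set.ncard_image_of_injective _ hpair, hm, hm', Set.ncard_univ,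
        Nat.card_eq_fintype_card]
    simp only [Fintype.card_fun, Fintype.card_bool, Fintype.card_fin]
    ring
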